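/- Let μ > 0, λ > 0, a ∈ ℝ, and define ψ(x; a) = φ_μ(x) + (1/(2λ))(x − a)². If |a| = √(μ² + 2λ), then both a and (μ²/(μ² + 2λ)) a are global minimizers of ψ(·; a), and ψ(a; a) = ψ((μ²/(μ² + 2λ)) a; a) = 1. -/

import Mathlib

/-- Scalar truncated Huber function: φ_μ(t) = min(1, t²/μ²). -/
noncomputable def phiTH (μ t : ℝ) : ℝ := min 1 (t ^ 2 / μ ^ 2)

/-- The function ψ(x; a) = φ_μ(x) + (1/(2λ))(x − a)². -/
noncomputable def psiTH (μ lam a x : ℝ) : ℝ := phiTH μ x + (1 / (2 * lam)) * (x - a) ^ 2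

theorem stmt6 (μ lam a : ℝ) (hμ : 0 < μ) (hlam : 0 < lam)
    (ha : |a| = Real.sqrt (μ ^ 2 + 2 * lam)) :
    (∀ x : ℝ, psiTH μ lam a a ≤ psiTH μ lam a x) ∧
    (∀ x : ℝ, psiTH μ lam a ((μ ^ 2 / (μ ^ 2 + 2 * lam)) * a) ≤ psiTH μ lam a x) ∧
    psiTH μ lam a a = 1 ∧
    psiTH μ lam a ((μ ^ 2 / (μ ^ 2 + 2 * lam)) * a) = 1 := by
  have hs : (0:ℝ) < μ ^ 2 + 2 * lam := by positivity
  have ha2 : a ^ 2 = μ ^ 2 + 2 * lam := by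
    have := sq_abs a
    rw [ha, Real.sq_sqrt hs.le] at this
    linarith
  have hμ2 : (0:ℝ) < μ ^ 2 := by positivity
  -- lower bound
  have key : ∀ x : ℝ, (1:ℝ) ≤ psiTH μ lam a x := by
    intro x
    unfold psiTH phiTH
    rcases le_or_gt (μ ^ 2) (x ^ 2) with h | h
    · rw [min_eq_left ((one_le_div hμ2).mpr h)]
      have hnn : (0:ℝ) ≤ 1 / (2 * lam) * (x - a) ^ 2 := by positivity
      linarith
    · rw [min_eq_right ((div_le_one hμ2).mpr h.le)]
      have hineq : 2 * lam * μ ^ 2 ≤ 2 * lam * x ^ 2 + μ ^ 2 * (x - a) ^ 2 := by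
        have hid : ((μ ^ 2 + 2 * lam) * x - μ ^ 2 * a) ^ 2 =
            (μ ^ 2 + 2 * lam) *
              (2 * lam * x ^ 2 + μ ^ 2 * (x - a) ^ 2 - 2 * lam * μ ^ 2) := by
          linear_combination (-(2 * lam * μ ^ 2)) * ha2
        nlinarith [sq_nonneg ((μ ^ 2 + 2 * lam) * x - μ ^ 2 * a), hs]
      have h2 : x ^ 2 / μ ^ 2 + 1 / (2 * lam) * (x - a) ^ 2 =
          (2 * lam * x ^ 2 + μ ^ 2 * (x - a) ^ 2) / (2 * lam * μ ^ 2) := by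
        field_simp
      rw [h2, le_div_iff₀ (by positivity)]
      linarith
  -- value at a
  have val1 : psiTH μ lam a a = 1 := by
    unfold psiTH phiTH
    have : min 1 (a ^ 2 / μ ^ 2) = 1 := min_eq_left (by
      rw [ha2, le_div_iff₀ hμ2]; nlinarith)
    rw [this]; ring
  -- value at second point
  have val2 : psiTH μ lam a ((μ ^ 2 / (μ ^ 2 + 2 * lam)) * a) = 1 := by
    unfold psiTH phiTH
    have hx2 : ((μ ^ 2 / (μ ^ 2 + 2 * lam)) * a) ^ 2 = μ ^ 4 / (μ ^ 2 + 2 * lam) := by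
      field_simp
      linear_combination ha2
    have hle : ((μ ^ 2 / (μ ^ 2 + 2 * lam)) * a) ^ 2 / μ ^ 2 ≤ 1 := by
      rw [hx2, div_le_one hμ2, div_le_iff₀ hs]
      nlinarith
    rw [min_eq_right hle, hx2]
    have h2 : ((μ ^ 2 / (μ ^ 2 + 2 * lam)) * a - a) ^ 2 =
        4 * lam ^ 2 / (μ ^ 2 + 2 * lam) := by
      field_simp
      linear_combination (4 * lam ^ 2) * ha2
    rw [h2]
    field_simp
    ring
  exact ⟨fun x => val1 ▸ key x, fun x => val2 ▸ key x, val1, val2⟩
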